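/- arXiv:1102.4425 — 2 statements merged into one kernel-verified Lean document; each statement's English description precedes it below -/
import Mathlib

section
/- There is a bijection between paths of length m in the slow graph Γ̃ starting at (n1,λ1) and ending at (n2,λ2), and pairs consisting of a path from λ1 to λ2 in Γ and a path from (n1,|λ1|) to (n2,|λ2|) in the Pascal graph; the bijection sends a path in Γ̃ to the strictly increasing sequence of distinct Γ-vertices it visits together with the sequence of levels |λ_i|. -/
private lemma nat_mono' {G : ℕ → ℕ} {m : ℕ}
    (hstep : ∀ j < m, G (j+1) = G j ∨ G (j+1) = G j + 1) :
    ∀ a b : ℕ, a ≤ b → b ≤ m → G a ≤ G b ∧ G b ≤ G a + (b - a) := by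
  intro a b hab
  induction b, hab using Nat.le_induction with
  | base => intro _; omega
  | succ b hab ih =>
    intro hbm
    have h1 := ih (by omega)
    rcases hstep b (by omega) with h | h <;> omega

private lemma nat_ivt' {G : ℕ → ℕ} {m : ℕ}
    (hstep : ∀ j < m, G (j+1) = G j ∨ G (j+1) = G j + 1)
    {t : ℕ} (h0 : G 0 ≤ t) (hm : t ≤ G m) : ∃ j, j ≤ m ∧ G j = t := by
  classical
  have hex : ∃ j, j ≤ m ∧ t ≤ G j := ⟨m, le_rfl, hm⟩
  obtain ⟨hjm, hjt⟩ := Nat.find_spec hex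
  rcases hj : Nat.find hex with _ | j'
  · refine ⟨0, by omega, ?_⟩
    rw [hj] at hjt
    omega
  · have hmin := Nat.find_min hex (m := j') (by omega)
    rw [hj] at hjt hjm
    have hj'm : j' < m := by omega
    have hGj' : G j' < t := by
      by_contra h
      exact hmin ⟨by omega, by omega⟩
    refine ⟨j' + 1, by omega, ?_⟩
    rcases hstep j' hj'm with h | h <;> omega

private lemma nat_const' {V : Type*} {lvl : V → ℕ} {E : V → V → Prop}
    (hgrade : ∀ x y, E x y → lvl y = lvl x + 1)
    {F : ℕ → V} {m : ℕ}
    (hstep : ∀ j < m, F (j+1) = F j ∨ E (F j) (F (j+1))) :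
    ∀ a b : ℕ, a ≤ b → b ≤ m → lvl (F a) = lvl (F b) → F a = F b := by
  have hG : ∀ j < m, lvl (F (j+1)) = lvl (F j) ∨ lvl (F (j+1)) = lvl (F j) + 1 :=
    fun j hj => (hstep j hj).imp (fun h => by rw [h]) (fun h => hgrade _ _ h)
  intro a b hab
  induction b, hab using Nat.le_induction with
  | base => intro _ _; rfl
  | succ b hab ih =>
    intro hbm hl
    have hmono := nat_mono' (G := fun j => lvl (F j)) hG a b hab (by omega)
    rcases hstep b (by omega) with h | h
    · rw [h] at hl ⊢
      exact ih (by omega) hl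
    · have := hgrade _ _ h
      omega

private lemma nat_exact' {G : ℕ → ℕ} {m : ℕ} (hstep : ∀ j < m, G (j+1) = G j + 1) :
    ∀ i, i ≤ m → G i = G 0 + i := by
  intro i
  induction i with
  | zero => intro _; omega
  | succ i ih =>
    intro h
    have h1 := hstep i (by omega)
    have h2 := ih (by omega)
    omega

-- bridge: Fin step property to ℕ step property for the clamped extension
private lemma fin_step_nat {α : Type*} {m : ℕ} (F : Fin (m+1) → α) (P : α → α → Prop)
    (hstep : ∀ j : Fin m, P (F j.castSucc) (F j.succ)) :
    ∀ j < m, P ((fun j : ℕ => F ⟨min j m, by omega⟩) j) ((fun j : ℕ => F ⟨min j m, by omega⟩) (j+1)) := by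
  intro j hj
  have h1 : (⟨min j m, by omega⟩ : Fin (m+1)) = (⟨j, hj⟩ : Fin m).castSucc :=
    Fin.ext (by simp; omega)
  have h2 : (⟨min (j+1) m, by omega⟩ : Fin (m+1)) = (⟨j, hj⟩ : Fin m).succ :=
    Fin.ext (by simp; omega)
  simp only
  rw [h1, h2]
  exact hstep _

private lemma fin_clamp_eval {α : Type*} {m : ℕ} (F : Fin (m+1) → α) (j : Fin (m+1)) :
    F ⟨min (j : ℕ) m, by omega⟩ = F j := by
  congr 1
  exact Fin.ext (by have := j.isLt; simp; omega)

private lemma fin_mono {m : ℕ} {G : Fin (m+1) → ℕ}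
    (hstep : ∀ j : Fin m, G j.succ = G j.castSucc ∨ G j.succ = G j.castSucc + 1)
    (a b : Fin (m+1)) (hab : (a : ℕ) ≤ (b : ℕ)) :
    G a ≤ G b ∧ G b ≤ G a + ((b : ℕ) - (a : ℕ)) := by
  have hN := nat_mono' (G := fun j : ℕ => G ⟨min j m, by omega⟩)
    (fin_step_nat G (fun x y => y = x ∨ y = x + 1) hstep) a b hab (by have := b.isLt; omega)
  rwa [fin_clamp_eval G a, fin_clamp_eval G b] at hN

private lemma fin_ivt {m : ℕ} {G : Fin (m+1) → ℕ}
    (hstep : ∀ j : Fin m, G j.succ = G j.castSucc ∨ G j.succ = G j.castSucc + 1)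
    {t : ℕ} (h0 : G 0 ≤ t) (hm : t ≤ G (Fin.last m)) : ∃ j : Fin (m+1), G j = t := by
  have e0 : (fun j : ℕ => G ⟨min j m, by omega⟩) 0 = G 0 := by
    have := fin_clamp_eval G 0; simpa using this
  have em : (fun j : ℕ => G ⟨min j m, by omega⟩) m = G (Fin.last m) := by
    have := fin_clamp_eval G (Fin.last m); simpa using this
  obtain ⟨j, hjm, hjt⟩ := nat_ivt' (G := fun j : ℕ => G ⟨min j m, by omega⟩)
    (fin_step_nat G (fun x y => y = x ∨ y = x + 1) hstep) (t := t) (by beta_reduce at e0 em; omega) (by beta_reduce at e0 em; omega)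
  refine ⟨⟨j, by omega⟩, ?_⟩
  have : (⟨min j m, by omega⟩ : Fin (m+1)) = ⟨j, by omega⟩ := Fin.ext (by simp; omega)
  rwa [this] at hjt

private lemma fin_exact {m : ℕ} {G : Fin (m+1) → ℕ}
    (hstep : ∀ j : Fin m, G j.succ = G j.castSucc + 1) (i : Fin (m+1)) :
    G i = G 0 + (i : ℕ) := by
  have hN := nat_exact' (G := fun j : ℕ => G ⟨min j m, by omega⟩)
    (fin_step_nat G (fun x y => y = x + 1) hstep) i (by have := i.isLt; omega)
  have e0 : (fun j : ℕ => G ⟨min j m, by omega⟩) 0 = G 0 := by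
    have := fin_clamp_eval G 0; simpa using this
  beta_reduce at e0
  rwa [fin_clamp_eval G i, e0] at hN

private lemma fin_const {V : Type*} {lvl : V → ℕ} {E : V → V → Prop}
    (hgrade : ∀ x y, E x y → lvl y = lvl x + 1)
    {m : ℕ} {F : Fin (m+1) → V}
    (hstep : ∀ j : Fin m, F j.succ = F j.castSucc ∨ E (F j.castSucc) (F j.succ))
    (a b : Fin (m+1)) (h : lvl (F a) = lvl (F b)) : F a = F b := by
  have hN := nat_const' hgrade (F := fun j : ℕ => F ⟨min j m, by omega⟩)
    (fin_step_nat F (fun x y => y = x ∨ E x y) hstep)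
  rcases le_total (a : ℕ) (b : ℕ) with hab | hab
  · have := hN a b hab (by have := b.isLt; omega)
      (by rw [fin_clamp_eval F a, fin_clamp_eval F b]; exact h)
    rwa [fin_clamp_eval F a, fin_clamp_eval F b] at this
  · have := hN b a hab (by have := a.isLt; omega)
      (by rw [fin_clamp_eval F a, fin_clamp_eval F b]; exact h.symm)
    rw [fin_clamp_eval F a, fin_clamp_eval F b] at this
    exact this.symm

/-- Paths of length `m = n₂ - n₁` in the slow graph `Γ̃` from `(n₁, x₁)` to `(n₂, x₂)`
are in bijection with pairs (path `x₁ → x₂` in `Γ`, path `(n₁, lvl x₁) → (n₂, lvl x₂)`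
in the Pascal graph). The bijection sends a slow path `F` to the strictly increasing
sequence of distinct `Γ`-vertices it visits (so the `Γ`-path has the same set of
visited vertices as `F`) together with its sequence of levels `j ↦ lvl (F j)`. -/
theorem slow_graph_paths_equiv_prod {V : Type*} (lvl : V → ℕ) (E : V → V → Prop)
    (hgrade : ∀ x y, E x y → lvl y = lvl x + 1)
    (n₁ n₂ : ℕ) (x₁ x₂ : V) (hn : n₁ ≤ n₂) (h₁ : lvl x₁ ≤ n₁) (h₂ : lvl x₂ ≤ n₂) :
    ∃ e : {F : Fin (n₂ - n₁ + 1) → V //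
            F 0 = x₁ ∧ F (Fin.last _) = x₂ ∧
            ∀ j : Fin (n₂ - n₁), F j.succ = F j.castSucc ∨ E (F j.castSucc) (F j.succ)} ≃
          {f : Fin (lvl x₂ - lvl x₁ + 1) → V //
            f 0 = x₁ ∧ f (Fin.last _) = x₂ ∧
            ∀ j : Fin (lvl x₂ - lvl x₁), E (f j.castSucc) (f j.succ)} ×
          {g : Fin (n₂ - n₁ + 1) → ℕ //
            g 0 = lvl x₁ ∧ g (Fin.last _) = lvl x₂ ∧
            (∀ j : Fin (n₂ - n₁), g j.succ = g j.castSucc ∨ g j.succ = g j.castSucc + 1) ∧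
            (∀ j : Fin (n₂ - n₁ + 1), g j ≤ n₁ + (j : ℕ))},
      ∀ F, (∀ j : Fin (n₂ - n₁ + 1), ((e F).2 : Fin (n₂ - n₁ + 1) → ℕ) j = lvl (F.1 j)) ∧
        Set.range ((e F).1 : Fin (lvl x₂ - lvl x₁ + 1) → V) = Set.range F.1 := by
  classical
  set m := n₂ - n₁ with hmdef
  set k := lvl x₂ - lvl x₁ with hkdef
  -- bounds for the level sequence g
  have hgle : ∀ (g : Fin (m+1) → ℕ), g 0 = lvl x₁ → g (Fin.last m) = lvl x₂ →
      (∀ j : Fin m, g j.succ = g j.castSucc ∨ g j.succ = g j.castSucc + 1) →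
      ∀ j : Fin (m+1), lvl x₁ ≤ g j ∧ g j ≤ lvl x₂ := by
    intro g h0 hl hstep j
    have h1 := fin_mono hstep 0 j (by simp)
    have h2 := fin_mono hstep j (Fin.last m) (by simp [Fin.le_last, Fin.val_last]; omega)
    omega
  -- exact levels along a Γ-path f
  have hlf : ∀ (f : Fin (k+1) → V), f 0 = x₁ →
      (∀ j : Fin k, E (f j.castSucc) (f j.succ)) →
      ∀ i : Fin (k+1), lvl (f i) = lvl x₁ + (i : ℕ) := by
    intro f h0 hstep i
    have := fin_exact (G := fun i => lvl (f i)) (fun j => hgrade _ _ (hstep j)) i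
    rw [this, h0]
  -- the inverse map Φ
  let Φ : ({f : Fin (k+1) → V //
            f 0 = x₁ ∧ f (Fin.last _) = x₂ ∧
            ∀ j : Fin k, E (f j.castSucc) (f j.succ)} ×
          {g : Fin (m+1) → ℕ //
            g 0 = lvl x₁ ∧ g (Fin.last _) = lvl x₂ ∧
            (∀ j : Fin m, g j.succ = g j.castSucc ∨ g j.succ = g j.castSucc + 1) ∧
            (∀ j : Fin (m+1), g j ≤ n₁ + (j : ℕ))}) →
      {F : Fin (m+1) → V //
            F 0 = x₁ ∧ F (Fin.last _) = x₂ ∧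
            ∀ j : Fin m, F j.succ = F j.castSucc ∨ E (F j.castSucc) (F j.succ)} :=
    fun p => ⟨fun j => p.1.1 ⟨p.2.1 j - lvl x₁, by
        have h1 := hgle p.2.1 p.2.2.1 p.2.2.2.1 p.2.2.2.2.1 j
        omega⟩, by
      obtain ⟨⟨f, hf0, hfl, hfstep⟩, ⟨g, hg0, hgl, hgstep, hgbd⟩⟩ := p
      simp only
      have hb := hgle g hg0 hgl hgstep
      have hx12 : lvl x₁ ≤ lvl x₂ := by have := (hb (Fin.last m)).1; omega
      refine ⟨?_, ?_, ?_⟩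
      · convert hf0 using 2
        apply Fin.ext
        simp [hg0]
      · convert hfl using 2
        apply Fin.ext
        show g (Fin.last m) - lvl x₁ = k
        omega
      · intro j
        rcases hgstep j with h | h
        · left
          congr 1
          apply Fin.ext
          simp [h]
        · right
          have hcs := hb j.castSucc
          have hs := hb j.succ
          have hik : g j.castSucc - lvl x₁ < k := by omega
          have := hfstep ⟨g j.castSucc - lvl x₁, hik⟩
          convert this using 2 <;> apply Fin.ext <;> simp [Fin.val_succ] <;> omega⟩
  have hinj : Function.Injective Φ := by
    rintro ⟨⟨f, hf0, hfl, hfstep⟩, ⟨g, hg0, hgl, hgstep, hgbd⟩⟩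
      ⟨⟨f', hf0', hfl', hfstep'⟩, ⟨g', hg0', hgl', hgstep', hgbd'⟩⟩ h
    have hv := fun j => congrFun (congrArg Subtype.val h) j
    simp only [Φ] at hv
    have hbg := hgle g hg0 hgl hgstep
    have hbg' := hgle g' hg0' hgl' hgstep'
    have hx12 : lvl x₁ ≤ lvl x₂ := by have := (hbg (Fin.last m)).1; omega
    have hgeq : ∀ j : Fin (m+1), g j = g' j := by
      intro j
      have hlv := congrArg lvl (hv j)
      rw [hlf f hf0 hfstep, hlf f' hf0' hfstep'] at hlv
      have h1 := hbg j
      have h2 := hbg' j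
      simp only at hlv
      omega
    have hfeq : ∀ i : Fin (k+1), f i = f' i := by
      intro i
      obtain ⟨j, hj⟩ := fin_ivt hgstep (t := lvl x₁ + (i : ℕ))
        (by rw [hg0]; omega) (by rw [hgl]; have := i.isLt; omega)
      have hgj := hgeq j
      have hbj := hbg j
      have hbj' := hbg' j
      have e1 : (⟨g j - lvl x₁, by omega⟩ : Fin (k+1)) = i :=
        Fin.ext (show g j - lvl x₁ = (i : ℕ) by omega)
      have e2 : (⟨g' j - lvl x₁, by omega⟩ : Fin (k+1)) = i :=
        Fin.ext (show g' j - lvl x₁ = (i : ℕ) by omega)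
      exact ((congrArg f e1.symm).trans (hv j)).trans (congrArg f' e2)
    simp only [Prod.mk.injEq, Subtype.mk.injEq]
    exact ⟨funext hfeq, funext hgeq⟩
  have hsurj : Function.Surjective Φ := by
    rintro ⟨F, hF0, hFl, hFstep⟩
    have hlstep : ∀ j : Fin m, lvl (F j.succ) = lvl (F j.castSucc) ∨
        lvl (F j.succ) = lvl (F j.castSucc) + 1 :=
      fun j => (hFstep j).imp (fun h => by rw [h]) (fun h => hgrade _ _ h)
    have hFle : ∀ j : Fin (m+1), lvl x₁ ≤ lvl (F j) ∧ lvl (F j) ≤ lvl x₂ := by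
      have := hgle (fun j => lvl (F j)) (by simp [hF0]) (by simp [hFl]) hlstep
      simpa using this
    have hx12 : lvl x₁ ≤ lvl x₂ := by have := (hFle (Fin.last m)).1; rwa [hFl] at this
    have hex : ∀ i : Fin (k+1), ∃ j : Fin (m+1), lvl (F j) = lvl x₁ + (i : ℕ) := by
      intro i
      have := fin_ivt (G := fun j => lvl (F j)) hlstep (t := lvl x₁ + (i : ℕ))
        (by simp [hF0]) (by simp [hFl]; have := i.isLt; omega)
      simpa using this
    choose jf hjf using hex
    refine ⟨⟨⟨fun i => F (jf i), ?_, ?_, ?_⟩, ⟨fun j => lvl (F j), by simp [hF0],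
      by simp [hFl], hlstep, ?_⟩⟩, ?_⟩
    · have := fin_const hgrade hFstep (jf 0) 0
        (by rw [hjf 0, hF0]; simp)
      simp only
      rw [this, hF0]
    · have := fin_const hgrade hFstep (jf (Fin.last k)) (Fin.last m)
        (by rw [hjf (Fin.last k), hFl]; simp [Fin.val_last]; omega)
      simp only
      rw [this, hFl]
    · -- edges of f
      intro i
      have hic : lvl (F (jf i.castSucc)) = lvl x₁ + (i : ℕ) := by
        have := hjf i.castSucc; simpa using this
      have his : lvl (F (jf i.succ)) = lvl x₁ + (i : ℕ) + 1 := by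
        have := hjf i.succ; simp [Fin.val_succ] at this; omega
      have hexN : ∃ n : ℕ, ∃ jj : Fin (m+1), (jj : ℕ) = n ∧
          lvl (F jj) = lvl x₁ + (i : ℕ) + 1 := ⟨jf i.succ, jf i.succ, rfl, his⟩
      obtain ⟨jj, hjjv, hjjt⟩ := Nat.find_spec hexN
      have hjjne : (jj : ℕ) ≠ 0 := by
        intro h0
        have hz : jj = 0 := Fin.ext (by simpa using h0)
        rw [hz, hF0] at hjjt
        omega
      have hj'm : (jj : ℕ) - 1 < m := by have := jj.isLt; omega
      have hmin := Nat.find_min hexN (m := (jj : ℕ) - 1) (by omega)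
      set jp : Fin m := ⟨(jj : ℕ) - 1, hj'm⟩ with hjp
      have hsucc : jp.succ = jj := Fin.ext (by simp [hjp, Fin.val_succ]; omega)
      have hlevcs : lvl (F jp.castSucc) ≠ lvl x₁ + (i : ℕ) + 1 := by
        intro hcon
        exact hmin ⟨jp.castSucc, by simp [hjp], hcon⟩
      -- level of F jp.castSucc is lvl x₁ + i
      have hstepj := hlstep jp
      rw [hsucc, hjjt] at hstepj
      have hcsl : lvl (F jp.castSucc) = lvl x₁ + (i : ℕ) := by omega
      rcases hFstep jp with heq | hE
      · exfalso
        rw [hsucc] at heq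
        rw [heq] at hjjt
        omega
      · rw [hsucc] at hE
        have e1 : F jp.castSucc = F (jf i.castSucc) :=
          fin_const hgrade hFstep _ _ (by rw [hcsl, hic])
        have e2 : F jj = F (jf i.succ) :=
          fin_const hgrade hFstep _ _ (by rw [hjjt, his])
        show E (F (jf i.castSucc)) (F (jf i.succ))
        rw [← e1, ← e2]
        exact hE
    · -- bound for g
      intro j
      have := (fin_mono (G := fun j => lvl (F j)) hlstep 0 j (by simp)).2
      simp only [Fin.val_zero] at this
      rw [hF0] at this
      show lvl (F j) ≤ n₁ + (j : ℕ)
      omega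
    · -- Φ (f, g) = F
      apply Subtype.ext
      funext j
      simp only [Φ]
      apply fin_const hgrade hFstep
      rw [hjf]
      have := hFle j
      show lvl x₁ + (lvl (F j) - lvl x₁) = lvl (F j)
      omega
  refine ⟨(Equiv.ofBijective Φ ⟨hinj, hsurj⟩).symm, ?_⟩
  intro F
  set q := (Equiv.ofBijective Φ ⟨hinj, hsurj⟩).symm F with hq
  have hp : Φ q = F := Equiv.ofBijective_apply_symm_apply Φ ⟨hinj, hsurj⟩ F
  obtain ⟨⟨f, hf0, hfl, hfstep⟩, ⟨g, hg0, hgl, hgstep, hgbd⟩⟩ := q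
  have hv := fun j => congrFun (congrArg Subtype.val hp) j
  simp only [Φ] at hv
  have hbg := hgle g hg0 hgl hgstep
  have hx12 : lvl x₁ ≤ lvl x₂ := by have := (hbg (Fin.last m)).1; omega
  have hlev : ∀ j : Fin (m+1), g j = lvl (F.1 j) := by
    intro j
    have := congrArg lvl (hv j)
    rw [hlf f hf0 hfstep] at this
    simp only at this
    have := hbg j
    omega
  constructor
  · intro j
    exact hlev j
  · apply Set.eq_of_subset_of_subset
    · rintro x ⟨i, rfl⟩
      obtain ⟨j, hj⟩ := fin_ivt hgstep (t := lvl x₁ + (i : ℕ))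
        (by rw [hg0]; omega) (by rw [hgl]; have := i.isLt; omega)
      have hbj := hbg j
      exact ⟨j, (hv j).symm.trans
        (congrArg f (Fin.ext (show g j - lvl x₁ = (i : ℕ) by omega)))⟩
    · rintro x ⟨j, rfl⟩
      exact ⟨⟨g j - lvl x₁, by have := hbg j; omega⟩, hv j⟩
end

section
/- Let σ ∈ R_n be a partial bijection and χ a class function on S_r. Define χ*(σ) = Σ_K χ(μ_K σ μ_K^{-}), summed over r-element subsets K of the domain of σ with σ(K) = K, where μ_K : K → {1,...,r} is any fixed bijection and μ_K^{-} its inverse. Then χ*(σ) does not depend on the choice of the bijections μ_K, and χ* is invariant under conjugation of σ by elements of S_n. -/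
open scoped Classical in
/-- Let `σ ∈ R_n` and `χ` a class function on `S_r`. Put
`χ*(σ) = ∑_K χ(μ_K σ μ_K⁻)`, the sum over `r`-element subsets `K` of the domain of `σ`
with `σ(K) = K`, where `μ_K : K ≃ Fin r` is any bijection and `μ_K σ μ_K⁻ ∈ S_r` is the
conjugated restriction of `σ` (encoded by: `τ K` represents it iff
`σ x = μ_K⁻ (τ K (μ_K x))` for all `x ∈ K`). Then `χ*(σ)` is independent of the choice
of the bijections `μ_K`, and is invariant under conjugation of `σ` by any `g ∈ S_n`
(independence is the case `g = 1`). -/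
theorem chi_star_well_defined_and_conjugation_invariant (n r : ℕ)
    (χ : Equiv.Perm (Fin r) → ℂ)
    (hχ : ∀ g h : Equiv.Perm (Fin r), χ (g * h * g⁻¹) = χ h)
    (σ σ' : PEquiv (Fin n) (Fin n)) (g : Equiv.Perm (Fin n))
    (hσ' : σ' = (g⁻¹.toPEquiv.trans σ).trans g.toPEquiv)
    (e e' : ∀ K : Finset (Fin n), {x // x ∈ K} ≃ Fin r)
    (τ τ' : Finset (Fin n) → Equiv.Perm (Fin r))
    (hτ : ∀ K : Finset (Fin n), (K.card = r ∧ ∀ i ∈ K, ∃ j ∈ K, σ i = some j) →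
      ∀ x : {y // y ∈ K}, σ x.1 = some ((e K).symm (τ K ((e K) x))).1)
    (hτ' : ∀ K : Finset (Fin n), (K.card = r ∧ ∀ i ∈ K, ∃ j ∈ K, σ' i = some j) →
      ∀ x : {y // y ∈ K}, σ' x.1 = some ((e' K).symm (τ' K ((e' K) x))).1) :
    ∑ K ∈ Finset.univ.powerset.filter
        (fun K : Finset (Fin n) => K.card = r ∧ ∀ i ∈ K, ∃ j ∈ K, σ i = some j),
        χ (τ K) =
      ∑ K ∈ Finset.univ.powerset.filter
        (fun K : Finset (Fin n) => K.card = r ∧ ∀ i ∈ K, ∃ j ∈ K, σ' i = some j),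
        χ (τ' K) := by
  classical
  subst hσ'
  have hσ'app : ∀ x : Fin n,
      ((g⁻¹.toPEquiv.trans σ).trans g.toPEquiv) (g x) = (σ x).map g := by
    intro x
    show ((g⁻¹.toPEquiv (g x)).bind σ).bind g.toPEquiv = _
    simp [Equiv.toPEquiv_apply, Option.map_eq_bind]
    rfl
  have hgig : (⇑g⁻¹ ∘ ⇑g) = id := by funext z; simp
  have hggi : (⇑g ∘ ⇑g⁻¹) = id := by funext z; simp
  refine Finset.sum_nbij' (fun K => K.image ⇑g) (fun K => K.image ⇑g⁻¹) ?_ ?_ ?_ ?_ ?_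
  · intro K hK
    simp only [Finset.mem_filter, Finset.mem_powerset] at hK ⊢
    obtain ⟨-, hcard, hinv⟩ := hK
    refine ⟨Finset.subset_univ _, by
      rw [Finset.card_image_of_injective _ g.injective]; exact hcard, ?_⟩
    intro i hi
    obtain ⟨x, hx, rfl⟩ := Finset.mem_image.mp hi
    obtain ⟨j, hj, hσx⟩ := hinv x hx
    refine ⟨g j, Finset.mem_image_of_mem _ hj, ?_⟩
    rw [hσ'app, hσx]; rfl
  · intro K hK
    simp only [Finset.mem_filter, Finset.mem_powerset] at hK ⊢
    obtain ⟨-, hcard, hinv⟩ := hK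
    refine ⟨Finset.subset_univ _, by
      rw [Finset.card_image_of_injective _ g⁻¹.injective]; exact hcard, ?_⟩
    intro i hi
    obtain ⟨x, hx, rfl⟩ := Finset.mem_image.mp hi
    obtain ⟨j, hj, hσx⟩ := hinv x hx
    refine ⟨g⁻¹ j, Finset.mem_image_of_mem _ hj, ?_⟩
    have h := hσ'app (g⁻¹ x)
    rw [show g (g⁻¹ x) = x from Equiv.apply_symm_apply g x] at h
    rw [hσx] at h
    cases hc : σ (g⁻¹ x) with
    | none => rw [hc] at h; simp at h
    | some cc =>
      rw [hc] at h
      simp only [Option.map_some] at h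
      have hj' : j = g cc := Option.some.inj h
      rw [hj']
      simp
  · intro K _
    simp only [Finset.image_image, hgig, Finset.image_id]
  · intro K _
    simp only [Finset.image_image, hggi, Finset.image_id]
  · intro K hK
    simp only [Finset.mem_filter, Finset.mem_powerset] at hK
    obtain ⟨-, hcard, hinv⟩ := hK
    set K' := K.image ⇑g with hK'
    have hP' : K'.card = r ∧ ∀ i ∈ K', ∃ j ∈ K',
        ((g⁻¹.toPEquiv.trans σ).trans g.toPEquiv) i = some j := by
      refine ⟨by rw [hK', Finset.card_image_of_injective _ g.injective]; exact hcard, ?_⟩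
      intro i hi
      obtain ⟨x, hx, rfl⟩ := Finset.mem_image.mp hi
      obtain ⟨j, hj, hσx⟩ := hinv x hx
      exact ⟨g j, Finset.mem_image_of_mem _ hj, by rw [hσ'app, hσx]; rfl⟩
    have hiff : ∀ a : Fin n, a ∈ K ↔ g a ∈ K' := by
      intro a
      constructor
      · intro h; exact Finset.mem_image_of_mem _ h
      · intro h
        obtain ⟨b, hb, hgb⟩ := Finset.mem_image.mp h
        rwa [← g.injective hgb]
    set c : Equiv.Perm (Fin r) :=
      ((e K).symm.trans ((Equiv.subtypeEquiv g hiff).trans (e' K'))) with hc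
    have hcomm : ∀ y : Fin r, τ' K' (c y) = c (τ K y) := by
      intro y
      set x : {z // z ∈ K} := (e K).symm y with hx
      have h1 : σ x.1 = some ((e K).symm (τ K y)).1 := by
        have := hτ K ⟨hcard, hinv⟩ x
        rwa [hx, Equiv.apply_symm_apply] at this
      have hgx : g x.1 ∈ K' := (hiff x.1).mp x.2
      have h2 := hτ' K' hP' ⟨g x.1, hgx⟩
      have h3 : ((g⁻¹.toPEquiv.trans σ).trans g.toPEquiv) (g x.1)
          = some (g ((e K).symm (τ K y)).1) := by
        rw [hσ'app, h1]; rfl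
      rw [h3] at h2
      have h4 : g ((e K).symm (τ K y)).1
          = ((e' K').symm (τ' K' (e' K' ⟨g x.1, hgx⟩))).1 := Option.some.inj h2
      have hcy : c y = e' K' ⟨g x.1, hgx⟩ := by
        simp only [hc, Equiv.trans_apply, ← hx]
        rfl
      rw [hcy]
      have h5 : (Equiv.subtypeEquiv g hiff) ((e K).symm (τ K y))
          = (e' K').symm (τ' K' ((e' K') ⟨g x.1, hgx⟩)) := Subtype.ext (by
        rw [Equiv.subtypeEquiv_apply]; exact h4)
      have h6 : c (τ K y) = e' K' ((e' K').symm (τ' K' ((e' K') ⟨g x.1, hgx⟩))) := by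
        rw [hc]; simp only [Equiv.trans_apply, h5]
      rw [h6, Equiv.apply_symm_apply]
    have hconj : τ' K' = c * τ K * c⁻¹ := Equiv.ext fun y => by
      have h6 := hcomm (c⁻¹ y)
      rw [show c (c⁻¹ y) = y from Equiv.apply_symm_apply c y] at h6
      simpa [Equiv.Perm.mul_apply] using h6
    rw [hconj, hχ]
end
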